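/- Let x and y be finite strings over a linearly ordered alphabet with y nonempty. If y is not a prefix of x (equivalently, lcp(x, y) < |y|), then lcp(x, y^∞) = lcp(x, y), and x ≺ y^∞ if and only if x <lex y. -/

import Mathlib

/-- The length of the longest common prefix of two lists. -/
def lcp {α : Type*} [DecidableEq α] : List α → List α → ℕ
  | a :: x, b :: y => if a = b then lcp x y + 1 else 0
  | _, _ => 0

/-- The first `m` characters of the infinite periodic sequence `y^∞`
    (for nonempty `y`). -/
def infTake {α : Type*} (y : List α) (m : ℕ) : List α :=
  ((List.replicate m y).flatten).take m

lemma lex_cons_iff' {α : Type*} {r : α → α → Prop} {a b : α} {s t : List α} :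
    List.Lex r (a :: s) (b :: t) ↔ r a b ∨ (a = b ∧ List.Lex r s t) := by
  constructor
  · intro h
    cases h with
    | rel h => exact Or.inl h
    | cons h => exact Or.inr ⟨rfl, h⟩
  · rintro (h | ⟨rfl, h⟩)
    · exact List.Lex.rel h
    · exact List.Lex.cons h

lemma lcp_lt_of_not_prefix {α : Type*} [DecidableEq α] :
    ∀ (x y : List α), ¬ y <+: x → lcp x y < y.length := by
  intro x
  induction x with
  | nil =>
    intro y h
    cases y with
    | nil => exact absurd List.nil_prefix h
    | cons b y' => simp [lcp]
  | cons a x' ih =>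
    intro y h
    cases y with
    | nil => exact absurd List.nil_prefix h
    | cons b y' =>
      by_cases hab : a = b
      · subst hab
        have : ¬ y' <+: x' := fun hp => h (by
          obtain ⟨t, ht⟩ := hp
          exact ⟨t, by simp [ht]⟩)
        simpa [lcp] using ih y' this
      · simp [lcp, hab]

lemma mainAux {α : Type*} [LinearOrder α] :
    ∀ (x y z : List α), lcp x y < y.length →
      lcp x ((y ++ z).take x.length) = lcp x y ∧
      ((List.Lex (· < ·) x ((y ++ z).take x.length) ∨ x = (y ++ z).take x.length) ↔
        List.Lex (· < ·) x y) := by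
  intro x
  induction x with
  | nil =>
    intro y z h
    cases y with
    | nil => simp [lcp] at h
    | cons b y' => simp [lcp, List.Lex.nil]
  | cons a x' ih =>
    intro y z h
    cases y with
    | nil => simp [lcp] at h
    | cons b y' =>
      simp only [List.cons_append, List.length_cons, List.take_succ_cons]
      by_cases hab : a = b
      · subst hab
        have h' : lcp x' y' < y'.length := by
          simp [lcp] at h; omega
        obtain ⟨h1, h2⟩ := ih y' z h'
        refine ⟨by simp [lcp, h1], ?_⟩
        simpa [lex_cons_iff'] using h2
      · refine ⟨by simp [lcp, hab], ?_⟩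
        simp [lex_cons_iff', hab]

/-- If `y` is nonempty and not a prefix of `x`, then `lcp(x, y^∞) = lcp(x, y)`,
    and `x ≺ y^∞ ↔ x <lex y`. -/
theorem lcp_infTake_of_not_prefix {α : Type*} [LinearOrder α] (x y : List α)
    (hy : y ≠ []) (hnp : ¬ y <+: x) :
    lcp x (infTake y x.length) = lcp x y ∧
    ((List.Lex (· < ·) x (infTake y x.length) ∨ x = infTake y x.length) ↔
      List.Lex (· < ·) x y) := by
  cases x with
  | nil =>
    cases y with
    | nil => exact absurd rfl hy
    | cons b y' =>
      refine ⟨by simp [infTake, lcp], ?_⟩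
      simp [infTake]
  | cons a x' =>
    have hlt := lcp_lt_of_not_prefix (a :: x') y hnp
    have hrw : infTake y (a :: x').length
        = ((y ++ (List.replicate x'.length y).flatten).take (a :: x').length) := by
      simp [infTake, List.replicate_succ]
    rw [hrw]
    exact mainAux (a :: x') y _ hlt
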